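/- The space S is not complete: the sequence f_k(t) = sin(1/(1−t)) restricted to [0, 1−2^{−k}] is Cauchy in (S, d_S) but has no limit in S. -/

import Mathlib

open Set Filter

noncomputable section

/-- The space `S`: continuous real functions on `[0, ρ]` with `f 0 = 0`.
The function is recorded as a map on all of `ℝ` which is constant in the
clamped variable, so that elements are determined by their values on `[0, ρ]`. -/
structure Sp where
  ρ : ℝ
  toFun : ℝ → ℝ
  ρ_nonneg : 0 ≤ ρ
  contOn : ContinuousOn toFun (Set.Icc 0 ρ)
  zero_at_zero : toFun 0 = 0
  eq_clamp : ∀ t, toFun t = toFun (max 0 (min t ρ))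

/-- The moment of segregation of two elements of `S`. -/
noncomputable def seg (f1 f2 : Sp) : ℝ :=
  sSup {t | t ≤ min f1.ρ f2.ρ ∧ ∀ t' ∈ Set.Ico (0:ℝ) t, f1.toFun t' = f2.toFun t'}

/-- The metric on `S`: `d_S(f1, f2) = (ρ1 - s) + (ρ2 - s)`. -/
noncomputable def dS (f1 f2 : Sp) : ℝ := (f1.ρ - seg f1 f2) + (f2.ρ - seg f1 f2)

lemma segSet_zero_mem (f1 f2 : Sp) :
    (0:ℝ) ∈ {t | t ≤ min f1.ρ f2.ρ ∧ ∀ t' ∈ Set.Ico (0:ℝ) t, f1.toFun t' = f2.toFun t'} := by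
  refine ⟨le_min f1.ρ_nonneg f2.ρ_nonneg, ?_⟩
  intro t' ht'
  exact absurd ht'.2 (not_lt.mpr ht'.1)

lemma segSet_bdd (f1 f2 : Sp) :
    BddAbove {t | t ≤ min f1.ρ f2.ρ ∧ ∀ t' ∈ Set.Ico (0:ℝ) t, f1.toFun t' = f2.toFun t'} :=
  ⟨min f1.ρ f2.ρ, fun _ ht => ht.1⟩

lemma seg_le_min (f1 f2 : Sp) : seg f1 f2 ≤ min f1.ρ f2.ρ :=
  csSup_le ⟨0, segSet_zero_mem f1 f2⟩ fun _ ht => ht.1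

lemma seg_nonneg (f1 f2 : Sp) : 0 ≤ seg f1 f2 :=
  le_csSup (segSet_bdd f1 f2) (segSet_zero_mem f1 f2)

lemma eq_of_lt_seg (f1 f2 : Sp) {t : ℝ} (h0 : 0 ≤ t) (h : t < seg f1 f2) :
    f1.toFun t = f2.toFun t := by
  obtain ⟨a, ha, hta⟩ := exists_lt_of_lt_csSup ⟨0, segSet_zero_mem f1 f2⟩ h
  exact ha.2 t ⟨h0, hta⟩

lemma sin_aux1 (n : ℕ) : Real.sin (2 * Real.pi * n + Real.pi / 2) = 1 := by
  have : 2 * Real.pi * n + Real.pi / 2 = Real.pi / 2 + n * (2 * Real.pi) := by ring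
  rw [this, Real.sin_add_nat_mul_two_pi, Real.sin_pi_div_two]

lemma sin_aux2 (n : ℕ) : Real.sin (2 * Real.pi * n + 3 * Real.pi / 2) = -1 := by
  have : 2 * Real.pi * n + 3 * Real.pi / 2 = (Real.pi / 2 + n * (2 * Real.pi)) + Real.pi := by
    ring
  rw [this, Real.sin_add_pi, Real.sin_add_nat_mul_two_pi, Real.sin_pi_div_two]

/-- `S` is not complete: the sequence of functions
`f_k(t) = sin(1/(1-t)) - sin 1` on `[0, 1 - 2^{-k}]` is Cauchy for `d_S`
but has no limit in `S`. -/
theorem Sp_not_complete (fk : ℕ → Sp)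
    (hρ : ∀ k, (fk k).ρ = 1 - (1 / 2 : ℝ) ^ k)
    (hval : ∀ k, ∀ t ∈ Set.Icc (0:ℝ) ((fk k).ρ),
      (fk k).toFun t = Real.sin (1 / (1 - t)) - Real.sin 1) :
    (∀ δ : ℝ, 0 < δ → ∃ N : ℕ, ∀ m ≥ N, ∀ n ≥ N, dS (fk m) (fk n) < δ) ∧
    ¬ ∃ f : Sp, Tendsto (fun k => dS (fk k) f) atTop (nhds 0) := by
  have hhalf : ∀ {m n : ℕ}, m ≤ n → ((1/2:ℝ))^n ≤ (1/2)^m := by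
    intro m n h
    exact pow_le_pow_of_le_one (by norm_num) (by norm_num) h
  have hsegmn : ∀ m n, seg (fk m) (fk n) = min (fk m).ρ (fk n).ρ := by
    intro m n
    refine le_antisymm (seg_le_min _ _) ?_
    apply le_csSup (segSet_bdd _ _)
    refine ⟨le_refl _, ?_⟩
    intro t' ht'
    have h1 : t' ∈ Set.Icc (0:ℝ) (fk m).ρ :=
      ⟨ht'.1, (le_of_lt ht'.2).trans (min_le_left _ _)⟩
    have h2 : t' ∈ Set.Icc (0:ℝ) (fk n).ρ :=
      ⟨ht'.1, (le_of_lt ht'.2).trans (min_le_right _ _)⟩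
    rw [hval m t' h1, hval n t' h2]
  constructor
  · intro δ hδ
    obtain ⟨N, hN⟩ := exists_pow_lt_of_lt_one (half_pos hδ) (by norm_num : (1/2:ℝ) < 1)
    refine ⟨N, fun m hm n hn => ?_⟩
    have hbound : ∀ k, N ≤ k → (fk k).ρ - min (fk m).ρ (fk n).ρ ≤ (1/2:ℝ)^N := by
      intro k hk
      have h1 : (1 : ℝ) - (1/2)^N ≤ min (fk m).ρ (fk n).ρ := by
        refine le_min ?_ ?_ <;> rw [hρ] <;> linarith [hhalf hm, hhalf hn]
      have h2 : (fk k).ρ ≤ 1 := by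
        rw [hρ]; have : (0:ℝ) ≤ (1/2)^k := by positivity
        linarith
      linarith
    have := hbound m hm
    have := hbound n hn
    have hdSmn : dS (fk m) (fk n) = ((fk m).ρ - min (fk m).ρ (fk n).ρ)
        + ((fk n).ρ - min (fk m).ρ (fk n).ρ) := by
      rw [dS, hsegmn]
    rw [hdSmn]
    linarith
  · rintro ⟨f, hf⟩
    set s : ℕ → ℝ := fun k => seg (fk k) f with hs
    have hsle : ∀ k, s k ≤ min (fk k).ρ f.ρ := fun k => seg_le_min _ _
    have h2lim : Tendsto (fun k : ℕ => (1/2:ℝ)^k) atTop (nhds 0) :=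
      tendsto_pow_atTop_nhds_zero_of_lt_one (by norm_num) (by norm_num)
    have hρlim : Tendsto (fun k => (fk k).ρ) atTop (nhds 1) := by
      have := (tendsto_const_nhds (x := (1:ℝ)) (f := atTop)).sub h2lim
      simp only [sub_zero] at this
      refine Tendsto.congr (fun k => ?_) this
      rw [hρ]
    have hslim : Tendsto s atTop (nhds 1) := by
      refine tendsto_of_tendsto_of_tendsto_of_le_of_le
        (g := fun k => (fk k).ρ - dS (fk k) f) (h := fun k => (fk k).ρ)
        ?_ hρlim ?_ ?_
      · have := hρlim.sub hf
        simpa using this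
      · intro k
        have h1 : s k ≤ f.ρ := (hsle k).trans (min_le_right _ _)
        simp only [dS, hs]
        linarith
      · intro k
        exact (hsle k).trans (min_le_left _ _)
    have hρ1 : 1 ≤ f.ρ :=
      le_of_tendsto hslim (Filter.Eventually.of_forall
        (fun k => (hsle k).trans (min_le_right _ _)))
    have hfval : ∀ t : ℝ, 0 ≤ t → t < 1 →
        f.toFun t = Real.sin (1 / (1 - t)) - Real.sin 1 := by
      intro t h0 h1
      obtain ⟨k, hk⟩ := (hslim.eventually (eventually_gt_nhds h1)).exists
      have ht : t ∈ Set.Icc (0:ℝ) (fk k).ρ :=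
        ⟨h0, le_of_lt (lt_of_lt_of_le hk ((hsle k).trans (min_le_left _ _)))⟩
      rw [← eq_of_lt_seg (fk k) f h0 hk, hval k t ht]
    have hπ := Real.pi_gt_three
    -- the two test sequences
    have key : ∀ c : ℕ → ℝ, (∀ n, 1 < c n) → Tendsto c atTop atTop →
        (∀ n, Real.sin (c n) = Real.sin (c 0)) →
        f.toFun 1 = Real.sin (c 0) - Real.sin 1 := by
      intro c hc1 hctop hcsin
      set a : ℕ → ℝ := fun n => 1 - 1 / c n with ha
      have hc0 : ∀ n, 0 < c n := fun n => lt_trans one_pos (hc1 n)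
      have hmem : ∀ n, 0 ≤ a n ∧ a n < 1 := by
        intro n
        constructor
        · have h1 : 1 / c n ≤ 1 := by
            rw [div_le_one (hc0 n)]; exact (hc1 n).le
          simp only [ha]; linarith
        · have : 0 < 1 / c n := div_pos one_pos (hc0 n)
          simp only [ha]; linarith
      have haval : ∀ n, f.toFun (a n) = Real.sin (c 0) - Real.sin 1 := by
        intro n
        rw [hfval (a n) (hmem n).1 (hmem n).2]
        have : 1 - a n = 1 / c n := by simp [ha]
        rw [this, one_div_one_div, hcsin]
      have halim : Tendsto a atTop (nhds 1) := by
        have hinv : Tendsto (fun n => 1 / c n) atTop (nhds 0) := by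
          simp only [one_div]; exact hctop.inv_tendsto_atTop
        simpa [ha, one_div] using (tendsto_const_nhds (x := (1:ℝ)) (f := atTop)).sub hinv
      have hcw : ContinuousWithinAt f.toFun (Set.Icc 0 f.ρ) 1 :=
        f.contOn 1 ⟨zero_le_one, hρ1⟩
      have hmem' : ∀ n, a n ∈ Set.Icc 0 f.ρ :=
        fun n => ⟨(hmem n).1, (hmem n).2.le.trans hρ1⟩
      have htend : Tendsto (fun n => f.toFun (a n)) atTop (nhds (f.toFun 1)) :=
        hcw.tendsto.comp
          (tendsto_nhdsWithin_of_tendsto_nhds_of_eventually_within a halim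
            (Filter.Eventually.of_forall hmem'))
      have : Tendsto (fun _ : ℕ => Real.sin (c 0) - Real.sin 1) atTop
          (nhds (f.toFun 1)) := by
        refine Tendsto.congr (fun n => haval n) htend
      exact tendsto_nhds_unique this tendsto_const_nhds
    have hctop : Tendsto (fun n : ℕ => 2 * Real.pi * n) atTop atTop := by
      exact Tendsto.const_mul_atTop (by positivity) tendsto_natCast_atTop_atTop
    have key1 := key (fun n => 2 * Real.pi * n + Real.pi / 2)
      (fun n => by
        have : (0:ℝ) ≤ 2 * Real.pi * n := by positivity
        linarith)
      (tendsto_atTop_add_const_right _ _ hctop)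
      (fun n => by simp only [sin_aux1])
    have key2 := key (fun n => 2 * Real.pi * n + 3 * Real.pi / 2)
      (fun n => by
        have : (0:ℝ) ≤ 2 * Real.pi * n := by positivity
        linarith)
      (tendsto_atTop_add_const_right _ _ hctop)
      (fun n => by simp only [sin_aux2])
    rw [sin_aux1 0] at key1
    rw [sin_aux2 0] at key2
    linarith
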